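/- arXiv:0811.3274 — 4 statements merged into one kernel-verified Lean document; each statement's English description precedes it below -/
import Mathlib

section
/- Let ω = exp(2π√−1/3). Let α1, α2, α3 be complex numbers and let β1, β2, β3 be complex numbers with β1^3 = α1, β2^3 = α2, β3^3 = α3. Then the following are equivalent: (i) there exist complex numbers y0, y1, y2, y3, not all zero, and a nonzero complex number λ such that y0^4 + y1^4 + y2^4 + y3^4 = 0, y0 + α1·y1 + α2·y2 + α3·y3 = 0, 4·y0^3 = λ, 4·y1^3 = λ·α1, 4·y2^3 = λ·α2, and 4·y3^3 = λ·α3; (ii) the product over all i1, i2, i3 ∈ {0, 1, 2} of (1 + ω^{i1}·β1^4 + ω^{i2}·β2^4 + ω^{i3}·β3^4) equals 0. -/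
noncomputable def ω : ℂ := Complex.exp (2 * Real.pi * Complex.I / 3)

lemma hω3 : ω ^ 3 = 1 := by
  rw [ω, ← Complex.exp_nat_mul]
  rw [show ((3:ℕ):ℂ) * (2 * Real.pi * Complex.I / 3) = 2 * Real.pi * Complex.I by ring]
  exact Complex.exp_two_pi_mul_I

lemma hωne : ω ≠ 1 := by
  have h : ω = Complex.exp ((2 * Real.pi / 3 : ℝ) * Complex.I) := by
    rw [ω]; push_cast; ring_nf
  intro h1
  have him : (ω).im = Real.sin (2 * Real.pi / 3) := by
    rw [h, Complex.exp_ofReal_mul_I_im]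
  have : Real.sin (2 * Real.pi / 3) > 0 := by
    apply Real.sin_pos_of_pos_of_lt_pi <;> nlinarith [Real.pi_pos]
  rw [h1] at him; simp at him; linarith [him ▸ this]

lemma hωsum : 1 + ω + ω ^ 2 = 0 := by
  have h : (ω - 1) * (1 + ω + ω ^ 2) = 0 := by linear_combination hω3
  rcases mul_eq_zero.mp h with h' | h'
  · exact absurd (sub_eq_zero.mp h') hωne
  · exact h'

lemma cube_eq_one (x : ℂ) (hx : x ^ 3 = 1) : x = 1 ∨ x = ω ∨ x = ω ^ 2 := by
  have key : (x - 1) * (x - ω) * (x - ω ^ 2) = 0 := by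
    linear_combination hx + (x - x ^ 2) * hωsum + (x - 1) * hω3
  rcases mul_eq_zero.mp key with h | h
  · rcases mul_eq_zero.mp h with h' | h'
    · exact Or.inl (sub_eq_zero.mp h')
    · exact Or.inr (Or.inl (sub_eq_zero.mp h'))
  · exact Or.inr (Or.inr (sub_eq_zero.mp h))

lemma cube_root_rel (a b : ℂ) (h : a ^ 3 = b ^ 3) : ∃ j : Fin 3, a = ω ^ (j : ℕ) * b := by
  rcases eq_or_ne b 0 with hb | hb
  · subst hb
    refine ⟨0, ?_⟩
    have ha : a = 0 := by
      have h0 : a ^ 3 = 0 := by simpa using h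
      exact pow_eq_zero_iff (by norm_num) |>.mp h0
    simp [ha]
  · have hx : (a / b) ^ 3 = 1 := by rw [div_pow, h, div_self (pow_ne_zero 3 hb)]
    rcases cube_eq_one _ hx with h' | h' | h'
    · exact ⟨0, by field_simp at h'; simp [h']⟩
    · refine ⟨1, ?_⟩
      have := (div_eq_iff hb).mp h'
      simpa using this
    · refine ⟨2, ?_⟩
      have := (div_eq_iff hb).mp h'
      simpa using this

theorem dual_membership_iff_product_vanishes (α1 α2 α3 β1 β2 β3 : ℂ)
    (hβ1 : β1 ^ 3 = α1) (hβ2 : β2 ^ 3 = α2) (hβ3 : β3 ^ 3 = α3) :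
    (∃ y0 y1 y2 y3 l : ℂ,
        ¬(y0 = 0 ∧ y1 = 0 ∧ y2 = 0 ∧ y3 = 0) ∧ l ≠ 0 ∧
        y0 ^ 4 + y1 ^ 4 + y2 ^ 4 + y3 ^ 4 = 0 ∧
        y0 + α1 * y1 + α2 * y2 + α3 * y3 = 0 ∧
        4 * y0 ^ 3 = l ∧ 4 * y1 ^ 3 = l * α1 ∧
        4 * y2 ^ 3 = l * α2 ∧ 4 * y3 ^ 3 = l * α3) ↔
    (∏ i1 : Fin 3, ∏ i2 : Fin 3, ∏ i3 : Fin 3,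
        (1 + ω ^ (i1 : ℕ) * β1 ^ 4 + ω ^ (i2 : ℕ) * β2 ^ 4 + ω ^ (i3 : ℕ) * β3 ^ 4)) = 0 := by
  subst hβ1 hβ2 hβ3
  constructor
  · rintro ⟨y0, y1, y2, y3, l, -, hl, -, hlin, h0, h1, h2, h3⟩
    have hy0 : y0 ≠ 0 := fun h => hl (by rw [← h0, h]; ring)
    obtain ⟨j1, hj1⟩ := cube_root_rel y1 (y0 * β1) (by
      have : 4 * y1 ^ 3 = 4 * y0 ^ 3 * β1 ^ 3 := by rw [h1, ← h0]
      linear_combination this / 4)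
    obtain ⟨j2, hj2⟩ := cube_root_rel y2 (y0 * β2) (by
      have : 4 * y2 ^ 3 = 4 * y0 ^ 3 * β2 ^ 3 := by rw [h2, ← h0]
      linear_combination this / 4)
    obtain ⟨j3, hj3⟩ := cube_root_rel y3 (y0 * β3) (by
      have : 4 * y3 ^ 3 = 4 * y0 ^ 3 * β3 ^ 3 := by rw [h3, ← h0]
      linear_combination this / 4)
    have hF : 1 + ω ^ (j1 : ℕ) * β1 ^ 4 + ω ^ (j2 : ℕ) * β2 ^ 4 + ω ^ (j3 : ℕ) * β3 ^ 4 = 0 := by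
      have key : y0 * (1 + ω ^ (j1 : ℕ) * β1 ^ 4 + ω ^ (j2 : ℕ) * β2 ^ 4 + ω ^ (j3 : ℕ) * β3 ^ 4)
          = 0 := by
        rw [hj1, hj2, hj3] at hlin
        linear_combination hlin
      exact (mul_eq_zero.mp key).resolve_left hy0
    exact Finset.prod_eq_zero (Finset.mem_univ j1)
      (Finset.prod_eq_zero (Finset.mem_univ j2)
        (Finset.prod_eq_zero (Finset.mem_univ j3) hF))
  · intro hprod
    obtain ⟨j1, -, h⟩ := Finset.prod_eq_zero_iff.mp hprod
    obtain ⟨j2, -, h⟩ := Finset.prod_eq_zero_iff.mp h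
    obtain ⟨j3, -, hF⟩ := Finset.prod_eq_zero_iff.mp h
    have hcube : ∀ j : Fin 3, (ω ^ (j : ℕ)) ^ 3 = 1 := fun j => by
      rw [← pow_mul, mul_comm, pow_mul, hω3, one_pow]
    have hfour : ∀ j : Fin 3, ω ^ (4 * (j : ℕ)) = ω ^ (j : ℕ) := fun j => by
      rw [show 4 * (j : ℕ) = (j : ℕ) + 3 * (j : ℕ) by ring, pow_add, pow_mul, hω3, one_pow,
        mul_one]
    refine ⟨1, ω ^ (j1 : ℕ) * β1, ω ^ (j2 : ℕ) * β2, ω ^ (j3 : ℕ) * β3, 4,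
      fun h => one_ne_zero h.1, by norm_num, ?_, ?_, by norm_num, ?_, ?_, ?_⟩
    · have e1 := hfour j1; have e2 := hfour j2; have e3 := hfour j3
      rw [pow_mul'] at e1 e2 e3
      linear_combination hF + β1 ^ 4 * e1 + β2 ^ 4 * e2 + β3 ^ 4 * e3
    · linear_combination hF
    · linear_combination 4 * β1 ^ 3 * hcube j1
    · linear_combination 4 * β2 ^ 3 * hcube j2
    · linear_combination 4 * β3 ^ 3 * hcube j3
end

section
/- Let ω = exp(2π√−1/3) and for complex numbers β0, β1, β2, β3 define Φ(β0, β1, β2, β3) to be the product over all i1, i2, i3 ∈ {0, 1, 2} of (β0^4 + ω^{i1}·β1^4 + ω^{i2}·β2^4 + ω^{i3}·β3^4). Then for each fixed index i ∈ {0, 1, 2, 3}, Φ is invariant under the substitution which multiplies every β_j with j ≠ i by ω and leaves β_i fixed; for example Φ(β0, ω·β1, ω·β2, ω·β3) = Φ(β0, β1, β2, β3), and similarly for i = 1, 2, 3. -/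
noncomputable def Φ (β : Fin 4 → ℂ) : ℂ :=
  ∏ i1 : Fin 3, ∏ i2 : Fin 3, ∏ i3 : Fin 3,
    (β 0 ^ 4 + ω ^ (i1 : ℕ) * β 1 ^ 4 + ω ^ (i2 : ℕ) * β 2 ^ 4 + ω ^ (i3 : ℕ) * β 3 ^ 4)

lemma shift3 (g : ℂ → ℂ) :
    (∏ i : Fin 3, g (ω ^ (i : ℕ) * ω)) = ∏ i : Fin 3, g (ω ^ (i : ℕ)) := by
  rw [Fin.prod_univ_three, Fin.prod_univ_three]
  have e0 : ω ^ ((0 : Fin 3) : ℕ) * ω = ω ^ ((1 : Fin 3) : ℕ) := by norm_num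
  have e1 : ω ^ ((1 : Fin 3) : ℕ) * ω = ω ^ ((2 : Fin 3) : ℕ) := by norm_num; ring
  have e2 : ω ^ ((2 : Fin 3) : ℕ) * ω = ω ^ ((0 : Fin 3) : ℕ) := by
    norm_num; linear_combination hω3
  rw [e0, e1, e2]
  ring

noncomputable def F (b0 b1 b2 b3 : ℂ) : ℂ :=
  ∏ i1 : Fin 3, ∏ i2 : Fin 3, ∏ i3 : Fin 3,
    (b0 ^ 4 + ω ^ (i1 : ℕ) * b1 ^ 4 + ω ^ (i2 : ℕ) * b2 ^ 4 + ω ^ (i3 : ℕ) * b3 ^ 4)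

lemma M1 (b0 b1 b2 b3 : ℂ) : F b0 (ω * b1) b2 b3 = F b0 b1 b2 b3 := by
  unfold F
  rw [← shift3 (fun t => ∏ i2 : Fin 3, ∏ i3 : Fin 3,
      (b0 ^ 4 + t * b1 ^ 4 + ω ^ (i2 : ℕ) * b2 ^ 4 + ω ^ (i3 : ℕ) * b3 ^ 4))]
  refine Finset.prod_congr rfl fun i1 _ => Finset.prod_congr rfl fun i2 _ =>
    Finset.prod_congr rfl fun i3 _ => ?_
  linear_combination ω ^ (i1 : ℕ) * ω * b1 ^ 4 * hω3

lemma M2 (b0 b1 b2 b3 : ℂ) : F b0 b1 (ω * b2) b3 = F b0 b1 b2 b3 := by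
  unfold F
  refine Finset.prod_congr rfl fun i1 _ => ?_
  rw [← shift3 (fun t => ∏ i3 : Fin 3,
      (b0 ^ 4 + ω ^ (i1 : ℕ) * b1 ^ 4 + t * b2 ^ 4 + ω ^ (i3 : ℕ) * b3 ^ 4))]
  refine Finset.prod_congr rfl fun i2 _ => Finset.prod_congr rfl fun i3 _ => ?_
  linear_combination ω ^ (i2 : ℕ) * ω * b2 ^ 4 * hω3

lemma M3 (b0 b1 b2 b3 : ℂ) : F b0 b1 b2 (ω * b3) = F b0 b1 b2 b3 := by
  unfold F
  refine Finset.prod_congr rfl fun i1 _ => Finset.prod_congr rfl fun i2 _ => ?_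
  rw [← shift3 (fun t =>
      (b0 ^ 4 + ω ^ (i1 : ℕ) * b1 ^ 4 + ω ^ (i2 : ℕ) * b2 ^ 4 + t * b3 ^ 4))]
  refine Finset.prod_congr rfl fun i3 _ => ?_
  linear_combination ω ^ (i3 : ℕ) * ω * b3 ^ 4 * hω3

lemma Mall (b0 b1 b2 b3 : ℂ) : F (ω * b0) (ω * b1) (ω * b2) (ω * b3) = F b0 b1 b2 b3 := by
  unfold F
  have step : ∀ i1 i2 i3 : Fin 3,
      (ω*b0)^4 + ω^(i1:ℕ)*(ω*b1)^4 + ω^(i2:ℕ)*(ω*b2)^4 + ω^(i3:ℕ)*(ω*b3)^4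
      = ω * (b0^4 + ω^(i1:ℕ)*b1^4 + ω^(i2:ℕ)*b2^4 + ω^(i3:ℕ)*b3^4) := by
    intro i1 i2 i3
    linear_combination (b0^4*ω + ω^(i1:ℕ)*b1^4*ω + ω^(i2:ℕ)*b2^4*ω + ω^(i3:ℕ)*b3^4*ω) * hω3
  simp only [step, Finset.prod_mul_distrib, Finset.prod_const, Finset.card_univ,
    Fintype.card_fin, hω3, one_mul]

lemma hb : ∀ x : ℂ, x = ω * (ω * (ω * x)) := fun x => by linear_combination (-x) * hω3

theorem Phi_invariant_under_omega_substitution (β : Fin 4 → ℂ) (i : Fin 4) :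
    Φ (fun j => if j = i then β j else ω * β j) = Φ β := by
  have hF : ∀ b : Fin 4 → ℂ, Φ b = F (b 0) (b 1) (b 2) (b 3) := fun b => rfl
  rw [hF, hF]
  fin_cases i <;> simp [Fin.ext_iff, show ((3:Fin 4):ℕ) = 3 from rfl]
  · rw [M1, M2, M3]
  · conv_lhs => rw [hb (β 1)]
    rw [M1, M1, Mall]
  · conv_lhs => rw [hb (β 2)]
    rw [M2, M2, Mall]
  · conv_lhs => rw [hb (β 3)]
    rw [M3, M3, Mall]
end

section
/- Let c1, c2 be complex numbers with |c1|^4 + |c2|^4 < 1 and let v be any complex number. If x1, x2 are complex numbers satisfying c1^3·(c1^3·x1 + c2^3·x2)^3 + x1^3 = 0, c2^3·(c1^3·x1 + c2^3·x2)^3 + x2^3 = 0, and v·(c1^3·x1 + c2^3·x2)^3 = 0, then x1 = 0 and x2 = 0. -/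
lemma cube_eq_of_nonneg {a b : ℝ} (ha : 0 ≤ a) (hb : 0 ≤ b) (h : a ^ 3 = b ^ 3) : a = b := by
  rcases lt_trichotomy a b with h' | h' | h'
  · exact absurd h (pow_lt_pow_left₀ h' ha (by norm_num)).ne
  · exact h'
  · exact absurd h.symm (pow_lt_pow_left₀ h' hb (by norm_num)).ne

theorem no_singularities_on_line (c1 c2 : ℂ)
    (h : ‖c1‖ ^ 4 + ‖c2‖ ^ 4 < 1) (v : ℂ) (x1 x2 : ℂ)
    (h1 : c1 ^ 3 * (c1 ^ 3 * x1 + c2 ^ 3 * x2) ^ 3 + x1 ^ 3 = 0)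
    (h2 : c2 ^ 3 * (c1 ^ 3 * x1 + c2 ^ 3 * x2) ^ 3 + x2 ^ 3 = 0)
    (h3 : v * (c1 ^ 3 * x1 + c2 ^ 3 * x2) ^ 3 = 0) :
    x1 = 0 ∧ x2 = 0 := by
  set s : ℂ := c1 ^ 3 * x1 + c2 ^ 3 * x2 with hs
  have hx1 : x1 ^ 3 = -(c1 ^ 3 * s ^ 3) := by linear_combination h1
  have hx2 : x2 ^ 3 = -(c2 ^ 3 * s ^ 3) := by linear_combination h2
  have ha1 : ‖x1‖ = ‖c1‖ * ‖s‖ := by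
    have := congrArg (‖·‖) hx1
    simp only [norm_neg, norm_mul, norm_pow] at this
    exact cube_eq_of_nonneg (norm_nonneg _)
      (mul_nonneg (norm_nonneg _) (norm_nonneg _)) (by rw [this]; ring)
  have ha2 : ‖x2‖ = ‖c2‖ * ‖s‖ := by
    have := congrArg (‖·‖) hx2
    simp only [norm_neg, norm_mul, norm_pow] at this
    exact cube_eq_of_nonneg (norm_nonneg _)
      (mul_nonneg (norm_nonneg _) (norm_nonneg _)) (by rw [this]; ring)
  have hsle : ‖s‖ ≤ (‖c1‖ ^ 4 + ‖c2‖ ^ 4) * ‖s‖ := by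
    calc ‖s‖ ≤ ‖c1 ^ 3 * x1‖ + ‖c2 ^ 3 * x2‖ := by
          rw [hs]; exact norm_add_le _ _
      _ = (‖c1‖ ^ 4 + ‖c2‖ ^ 4) * ‖s‖ := by
          simp only [norm_mul, norm_pow, ha1, ha2]; ring
  have hs0 : s = 0 := by
    by_contra hne
    have hpos : 0 < ‖s‖ := norm_pos_iff.mpr hne
    nlinarith
  constructor
  · have : x1 ^ 3 = 0 := by rw [hx1, hs0]; ring
    exact pow_eq_zero_iff (by norm_num) |>.mp this
  · have : x2 ^ 3 = 0 := by rw [hx2, hs0]; ring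
    exact pow_eq_zero_iff (by norm_num) |>.mp this
end

section
/- Let c1, c2 be complex numbers with |c1|^4 + |c2|^4 < 1. Then there is no complex number x2 satisfying both (c1^3 + c2^3·x2)^4 + 1 + x2^4 = 0 and c2^3·(c1^3 + c2^3·x2)^3 + x2^3 = 0. -/
theorem no_branching_over_point (c1 c2 : ℂ)
    (h : ‖c1‖ ^ 4 + ‖c2‖ ^ 4 < 1) :
    ¬ ∃ x2 : ℂ,
        (c1 ^ 3 + c2 ^ 3 * x2) ^ 4 + 1 + x2 ^ 4 = 0 ∧
        c2 ^ 3 * (c1 ^ 3 + c2 ^ 3 * x2) ^ 3 + x2 ^ 3 = 0 := by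
  rintro ⟨x2, h1, h2⟩
  -- key algebraic identity: c1^3 * w^3 = -1 where w = c1^3 + c2^3 * x2
  have key : c1 ^ 3 * (c1 ^ 3 + c2 ^ 3 * x2) ^ 3 = -1 := by
    linear_combination h1 - x2 * h2
  have hx3 : x2 ^ 3 = (-(c2 * (c1 ^ 3 + c2 ^ 3 * x2))) ^ 3 := by linear_combination h2
  set a := ‖c1‖ with ha
  set b := ‖c2‖ with hb
  set W := ‖c1 ^ 3 + c2 ^ 3 * x2‖ with hW
  set X := ‖x2‖ with hX
  have ha0 : 0 ≤ a := norm_nonneg _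
  have hb0 : 0 ≤ b := norm_nonneg _
  have hW0 : 0 ≤ W := norm_nonneg _
  have hX0 : 0 ≤ X := norm_nonneg _
  -- |c1|^3 * |w|^3 = 1
  have F1 : (a * W) ^ 3 = 1 := by
    have := congrArg norm key
    simp only [norm_mul, norm_pow, norm_neg, norm_one] at this
    rw [mul_pow]
    exact this
  -- X = b * W
  have F2 : X = b * W := by
    have h3 : X ^ 3 = (b * W) ^ 3 := by
      have := congrArg norm hx3
      simpa [map_mul, map_pow] using this
    exact (pow_left_inj₀ hX0 (mul_nonneg hb0 hW0) (by norm_num)).mp h3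
  -- a * W = 1
  have haW : a * W = 1 := by
    have := (pow_left_inj₀ (mul_nonneg ha0 hW0) (zero_le_one) (n := 3) (by norm_num))
    exact this.mp (by simpa using F1)
  -- triangle inequality
  have F3 : W ≤ a ^ 3 + b ^ 3 * X := by
    calc W = ‖c1 ^ 3 + c2 ^ 3 * x2‖ := hW
    _ ≤ ‖c1 ^ 3‖ + ‖c2 ^ 3 * x2‖ := norm_add_le _ _
    _ = a ^ 3 + b ^ 3 * X := by simp [map_mul, map_pow, a, b, X]
  rw [F2] at F3
  have h5 := mul_le_mul_of_nonneg_left F3 ha0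
  nlinarith [haW, h5, pow_nonneg hb0 4]
end
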